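/- arXiv:1002.1886 — 2 statements merged into one kernel-verified Lean document; each statement's English description precedes it below -/
import Mathlib

section
/- For any dissociated set Λ in the dual of a finite abelian group G, any complex coefficients a_ξ for ξ ∈ Λ, and any positive integer p ≥ 2, the average over x ∈ G of |∑_{ξ∈Λ} a_ξ e^{2πi ξ·x}|^p is at most (C√p)^p (∑_{ξ∈Λ} |a_ξ|²)^{p/2} for an absolute constant C > 0. -/
open Finset
open scoped BigOperators

section RudinAux

lemma exp_le_cosh_add (c t : ℝ) (hc : 0 < c) (ht : |t| ≤ c) :
    Real.exp t ≤ Real.cosh c + Real.sinh c / c * t := by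
  obtain ⟨ht1, ht2⟩ := abs_le.1 ht
  have ha : (0:ℝ) ≤ (c - t) / (2 * c) := by
    apply div_nonneg (by linarith) (by linarith)
  have hb : (0:ℝ) ≤ (c + t) / (2 * c) := by
    apply div_nonneg (by linarith) (by linarith)
  have hab : (c - t) / (2 * c) + (c + t) / (2 * c) = 1 := by field_simp; ring
  have h := convexOn_exp.2 (Set.mem_univ (-c)) (Set.mem_univ c) ha hb hab
  have h1 : ((c - t) / (2 * c)) • (-c) + ((c + t) / (2 * c)) • c = t := by
    simp only [smul_eq_mul]
    field_simp
    ring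
  rw [h1] at h
  refine h.trans_eq ?_
  simp only [smul_eq_mul]
  rw [Real.cosh_eq, Real.sinh_eq]
  field_simp
  ring

lemma exp_re_mul_le (z w : ℂ) (hw : ‖w‖ = 1) :
    Real.exp ((z * w).re) ≤
      Real.cosh (‖z‖) +
        ((((Real.sinh (‖z‖) / ‖z‖ : ℝ) : ℂ) * z) * w).re := by
  have hre : ((((Real.sinh (‖z‖) / ‖z‖ : ℝ) : ℂ) * z) * w).re
      = Real.sinh (‖z‖) / ‖z‖ * (z * w).re := by
    rw [mul_assoc, Complex.re_ofReal_mul]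
  rw [hre]
  rcases eq_or_ne z 0 with rfl | hz
  · simp
  · have hc : 0 < ‖z‖ := norm_pos_iff.mpr hz
    have ht : |(z * w).re| ≤ ‖z‖ := by
      calc |(z * w).re| ≤ ‖z * w‖ := Complex.abs_re_le_norm _
        _ = ‖z‖ := by rw [norm_mul, hw, mul_one]
    exact exp_le_cosh_add _ _ hc ht

lemma pow_le_exp_aux (p : ℕ) (hp : 1 ≤ p) (u : ℝ) (hu : 0 ≤ u) :
    u ^ p ≤ (p:ℝ) ^ p * Real.exp (u - p) := by
  rcases eq_or_lt_of_le hu with rfl | hu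
  · rw [zero_pow (by omega : p ≠ 0)]
    positivity
  · have hp0 : (0:ℝ) < p := by exact_mod_cast hp
    have h1 : Real.log (u / p) ≤ u / p - 1 := Real.log_le_sub_one_of_pos (by positivity)
    have h2 : u ^ p = Real.exp (p * Real.log u) := by
      rw [Real.exp_nat_mul, Real.exp_log hu]
    have h3 : (p:ℝ) ^ p * Real.exp (u - p) = Real.exp (p * Real.log p + (u - p)) := by
      rw [Real.exp_add, Real.exp_nat_mul, Real.exp_log hp0]
    rw [h2, h3, Real.exp_le_exp]
    have h4 : Real.log u = Real.log p + Real.log (u / p) := by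
      rw [Real.log_div (ne_of_gt hu) (ne_of_gt hp0)]; ring
    rw [h4]
    have := mul_le_mul_of_nonneg_left h1 (le_of_lt hp0)
    rw [mul_sub] at this
    rw [mul_div_cancel₀] at this
    · nlinarith
    · exact ne_of_gt hp0

lemma abs_pow_le_exp (p : ℕ) (hp : 1 ≤ p) (lam t : ℝ) (hlam : 0 < lam) :
    |t| ^ p ≤ ((p:ℝ)/lam)^p * Real.exp (-(p:ℝ)) *
      (Real.exp (lam * t) + Real.exp (-(lam * t))) := by
  have h := pow_le_exp_aux p hp (lam * |t|) (by positivity)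
  have h2 : Real.exp (lam * |t|) ≤ Real.exp (lam * t) + Real.exp (-(lam * t)) := by
    rcases abs_cases t with ⟨h3, _⟩ | ⟨h3, _⟩ <;> rw [h3]
    · exact le_add_of_nonneg_right (Real.exp_pos _).le
    · rw [mul_neg]
      exact le_add_of_nonneg_left (Real.exp_pos _).le
  have e1 : |t| ^ p = (lam * |t|) ^ p / lam ^ p := by
    rw [mul_pow]
    field_simp
  rw [e1]
  calc (lam * |t|) ^ p / lam ^ p ≤ ((p:ℝ) ^ p * Real.exp (lam * |t| - p)) / lam ^ p := by
        gcongr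
    _ = ((p:ℝ)/lam)^p * Real.exp (-(p:ℝ)) * Real.exp (lam * |t|) := by
        rw [sub_eq_add_neg, Real.exp_add, div_pow]
        ring
    _ ≤ ((p:ℝ)/lam)^p * Real.exp (-(p:ℝ)) * (Real.exp (lam * t) + Real.exp (-(lam * t))) := by
        gcongr

lemma two_pow_bound (A B : ℝ) (hA : 0 ≤ A) (hB : 0 ≤ B) (p : ℕ) :
    (A + B) ^ p ≤ 2 ^ p * (A ^ p + B ^ p) := by
  calc (A + B) ^ p ≤ (2 * max A B) ^ p := by
        have : A + B ≤ 2 * max A B := by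
          rcases max_cases A B with ⟨h, _⟩ | ⟨h, _⟩ <;> rw [h] <;> linarith
        exact pow_le_pow_left₀ (by positivity) this p
    _ = 2 ^ p * (max A B) ^ p := mul_pow _ _ _
    _ ≤ 2 ^ p * (A ^ p + B ^ p) := by
        gcongr
        rcases max_cases A B with ⟨h, _⟩ | ⟨h, _⟩ <;> rw [h]
        · exact le_add_of_nonneg_right (by positivity)
        · exact le_add_of_nonneg_left (by positivity)

lemma dissociated_image {G : Type} [AddCommGroup G] [Fintype G]
    (e : AddChar G (AddChar G ℂ)) (he : Function.Injective e) {Λ : Finset G}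
    (hΛ : AddDissociated (Λ : Set G)) :
    AddDissociated (e '' (Λ : Set G)) := by
  classical
  have hmap : ∀ t : Finset G, e (∑ ξ ∈ t, ξ) = ∑ ξ ∈ t, e ξ := by
    intro t
    induction t using Finset.induction with
    | empty => simp; rfl
    | insert _ _ h ih => rw [Finset.sum_insert h, Finset.sum_insert h, AddChar.map_add_eq_mul, ih]; rfl
  intro t ht u hu htu
  set t' : Finset G := Λ.filter (fun ξ => e ξ ∈ t) with ht'
  set u' : Finset G := Λ.filter (fun ξ => e ξ ∈ u) with hu'
  have htim : t = t'.image e := by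
    ext ψ
    simp only [Finset.mem_image, ht', Finset.mem_filter]
    constructor
    · intro hψ
      obtain ⟨ξ, hξ, rfl⟩ := ht hψ
      exact ⟨ξ, ⟨hξ, hψ⟩, rfl⟩
    · rintro ⟨ξ, ⟨-, hξ⟩, rfl⟩; exact hξ
  have huim : u = u'.image e := by
    ext ψ
    simp only [Finset.mem_image, hu', Finset.mem_filter]
    constructor
    · intro hψ
      obtain ⟨ξ, hξ, rfl⟩ := hu hψ
      exact ⟨ξ, ⟨hξ, hψ⟩, rfl⟩
    · rintro ⟨ξ, ⟨-, hξ⟩, rfl⟩; exact hξ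
  have hsum : ∀ s : Finset G, ∑ ψ ∈ s.image e, ψ = e (∑ ξ ∈ s, ξ) := by
    intro s
    rw [Finset.sum_image (fun a _ b _ h => he h), hmap]
  have htu2 : ∑ ψ ∈ t, ψ = ∑ ψ ∈ u, ψ := htu
  rw [htim, huim, hsum, hsum] at htu2
  have : ∑ ξ ∈ t', ξ = ∑ ξ ∈ u', ξ := he htu2
  have ht'u' : t' = u' :=
    hΛ (by simp [ht', Set.subset_def]; tauto) (by simp [hu', Set.subset_def]; tauto) this
  rw [htim, huim, ht'u']

lemma exp_moment {G : Type} [AddCommGroup G] [Fintype G]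
    (e : AddChar G (AddChar G ℂ)) (he : Function.Injective e) {Λ : Finset G}
    (hΛ : AddDissociated (Λ : Set G)) (b : G → ℂ) :
    𝔼 x : G, Real.exp ((∑ ξ ∈ Λ, b ξ * e ξ x).re) ≤
      Real.exp ((∑ ξ ∈ Λ, ‖b ξ‖ ^ 2) / 2) := by
  classical
  set d : AddChar G ℂ → ℂ := fun ψ => ∑ ξ ∈ Λ.filter (fun ξ' => e ξ' = ψ), b ξ with hd_def
  have hd : ∀ ξ ∈ Λ, d (e ξ) = b ξ := by
    intro ξ hξ
    have hpred : (fun ξ' => e ξ' = e ξ) = (fun ξ' => ξ' = ξ) :=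
      funext fun ξ' => propext ⟨fun h => he h, fun h => by rw [h]⟩
    simp only [hd_def, hpred]
    rw [Finset.filter_eq' Λ ξ, if_pos hξ, Finset.sum_singleton]
  have hd0 : ∀ ψ, ψ ∉ Λ.image e → d ψ = 0 := by
    intro ψ hψ
    have : Λ.filter (fun ξ' => e ξ' = ψ) = ∅ := by
      rw [Finset.filter_eq_empty_iff]
      intro ξ hξ h
      exact hψ (h ▸ Finset.mem_image_of_mem e hξ)
    simp [hd_def, this]
  have hsupp : AddDissociated {ψ | d ψ ≠ 0} := by
    refine (dissociated_image e he hΛ).subset fun ψ hψ => ?_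
    by_contra h
    exact hψ (hd0 ψ (by simpa [Finset.coe_image] using h))
  set r : AddChar G ℂ → ℝ := fun ψ => Real.sinh (‖d ψ‖) / ‖d ψ‖ with hr
  set d' : AddChar G ℂ → ℂ := fun ψ => (r ψ : ℂ) * d ψ with hd'
  set c : AddChar G ℂ → ℝ := fun ψ => Real.cosh (‖d ψ‖) with hc
  have hpoint : ∀ x : G, Real.exp ((∑ ξ ∈ Λ, b ξ * e ξ x).re) ≤
      ∏ ψ : AddChar G ℂ, (c ψ + (d' ψ * ψ x).re) := by
    intro x
    have hfib : ∑ ξ ∈ Λ, b ξ * e ξ x = ∑ ψ : AddChar G ℂ, d ψ * ψ x := by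
      rw [← Finset.sum_fiberwise Λ (fun ξ => e ξ) (fun ξ => b ξ * e ξ x)]
      refine Finset.sum_congr rfl fun ψ _ => ?_
      rw [hd_def]
      rw [Finset.sum_mul]
      refine Finset.sum_congr rfl fun ξ hξ => ?_
      rw [(Finset.mem_filter.1 hξ).2]
    rw [hfib, Complex.re_sum, Real.exp_sum]
    refine Finset.prod_le_prod (fun ψ _ => (Real.exp_pos _).le) fun ψ _ => ?_
    have hw : ‖ψ x‖ = 1 := by
      exact ψ.norm_apply x
    simpa [hc, hd', hr, mul_assoc] using exp_re_mul_le (d ψ) (ψ x) hw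
  have hrand : 𝔼 x : G, ∏ ψ : AddChar G ℂ, (c ψ + (d' ψ * ψ x).re) = ∏ ψ : AddChar G ℂ, c ψ := by
    refine AddDissociated.randomisation c d' (hsupp.subset ?_)
    intro ψ hψ
    simp only [hd', Set.mem_setOf_eq, ne_eq] at hψ ⊢
    intro h
    exact hψ (by rw [h, mul_zero])
  calc 𝔼 x : G, Real.exp ((∑ ξ ∈ Λ, b ξ * e ξ x).re)
      ≤ 𝔼 x : G, ∏ ψ : AddChar G ℂ, (c ψ + (d' ψ * ψ x).re) :=
        Finset.expect_le_expect fun x _ => hpoint x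
    _ = ∏ ψ : AddChar G ℂ, c ψ := hrand
    _ ≤ ∏ ψ : AddChar G ℂ, Real.exp (‖d ψ‖ ^ 2 / 2) :=
        Finset.prod_le_prod (fun ψ _ => (Real.cosh_pos _).le) fun ψ _ =>
          Real.cosh_le_exp_half_sq _
    _ = Real.exp (∑ ψ : AddChar G ℂ, ‖d ψ‖ ^ 2 / 2) := (Real.exp_sum _ _).symm
    _ = Real.exp ((∑ ξ ∈ Λ, ‖b ξ‖ ^ 2) / 2) := by
        congr 1
        rw [← Finset.sum_div]
        congr 1
        rw [← Finset.sum_subset (Finset.subset_univ (Λ.image e))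
          (fun ψ _ hψ => by rw [hd0 ψ hψ]; simp)]
        rw [Finset.sum_image (fun ξ₁ _ ξ₂ _ h => he h)]
        exact Finset.sum_congr rfl fun ξ hξ => by rw [hd ξ hξ]

end RudinAux

/-- **Rudin's inequality.** For any finite abelian group `G` (with its dual realized inside `G`
via a perfect character pairing `e`), any dissociated set `Λ ⊆ G`, any complex coefficients
`a`, and any integer `p ≥ 2`,
`(1/|G|) ∑_x |∑_{ξ∈Λ} a_ξ e^{2πi ξ·x}|^p ≤ (C√p)^p (∑_{ξ∈Λ} |a_ξ|²)^{p/2}`. -/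
theorem rudin_inequality :
    ∃ C : ℝ, 0 < C ∧
      ∀ (G : Type) [AddCommGroup G] [Fintype G]
        (e : AddChar G (AddChar G ℂ)) (_ : Function.Injective e)
        (Λ : Finset G) (_ : AddDissociated (Λ : Set G))
        (a : G → ℂ) (p : ℕ) (_ : 2 ≤ p),
        (Fintype.card G : ℝ)⁻¹ *
            ∑ x : G, ‖∑ ξ ∈ Λ, a ξ * e ξ x‖ ^ p ≤
          (C * Real.sqrt p) ^ p * (∑ ξ ∈ Λ, ‖a ξ‖ ^ 2) ^ ((p : ℝ) / 2) := by
  refine ⟨8, by norm_num, ?_⟩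
  intro G _ _ e he Λ hΛ a p hp
  classical
  set f : G → ℂ := fun x => ∑ ξ ∈ Λ, a ξ * e ξ x with hf
  set V : ℝ := ∑ ξ ∈ Λ, (‖a ξ‖) ^ 2 with hV
  have hV0 : 0 ≤ V := Finset.sum_nonneg fun ξ _ => by positivity
  have hlhs : (Fintype.card G : ℝ)⁻¹ * ∑ x : G, (‖f x‖) ^ p
      = 𝔼 x : G, (‖f x‖) ^ p := by
    rw [Fintype.expect_eq_sum_div_card, div_eq_inv_mul]
  rw [hlhs]
  rcases eq_or_lt_of_le hV0 with hV0' | hVpos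
  · -- V = 0 : all coefficients vanish
    have ha : ∀ ξ ∈ Λ, a ξ = 0 := by
      intro ξ hξ
      have := (Finset.sum_eq_zero_iff_of_nonneg (fun ξ _ => by positivity)).1 hV0'.symm ξ hξ
      simpa [pow_eq_zero_iff] using this
    have hfz : ∀ x, f x = 0 := fun x => Finset.sum_eq_zero fun ξ hξ => by rw [ha ξ hξ, zero_mul]
    have : (𝔼 x : G, (‖f x‖) ^ p) = 0 := by
      rw [Finset.expect_eq_zero]
      intro x _
      rw [hfz x]
      simp [zero_pow (by omega : p ≠ 0)]
    rw [this]
    positivity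
  · -- main case
    have hp1 : 1 ≤ p := by omega
    have hppos : (0:ℝ) < p := by exact_mod_cast (by omega : 0 < p)
    set lam : ℝ := Real.sqrt p / Real.sqrt V with hlam_def
    have hlam : 0 < lam := by
      apply div_pos (Real.sqrt_pos.2 hppos) (Real.sqrt_pos.2 hVpos)
    have key : ∀ u : ℂ, ‖u‖ = 1 →
        𝔼 x : G, Real.exp ((u * (lam:ℂ) * f x).re) ≤ Real.exp ((p:ℝ)/2) := by
      intro u hu
      have h := exp_moment e he hΛ (fun ξ => u * (lam:ℂ) * a ξ)
      have hsum : ∀ x : G, ∑ ξ ∈ Λ, (u * (lam:ℂ) * a ξ) * e ξ x = u * (lam:ℂ) * f x := by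
        intro x
        rw [hf, Finset.mul_sum]
        exact Finset.sum_congr rfl fun ξ _ => by ring
      simp only [hsum] at h
      have hcoef : (∑ ξ ∈ Λ, ‖u * (lam:ℂ) * a ξ‖ ^ 2) = (p:ℝ) := by
        have : ∀ ξ, ‖u * (lam:ℂ) * a ξ‖ ^ 2 = lam^2 * ‖a ξ‖ ^ 2 := by
          intro ξ
          rw [norm_mul, norm_mul, hu, one_mul, Complex.norm_real, Real.norm_eq_abs, abs_of_pos hlam, mul_pow]
        simp only [this]
        rw [← Finset.mul_sum, ← hV, hlam_def, div_pow, Real.sq_sqrt hppos.le,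
          Real.sq_sqrt hV0, div_mul_cancel₀ _ (ne_of_gt hVpos)]
      rw [hcoef] at h
      exact h
    -- pointwise bound
    set K : ℝ := 2^p * (((p:ℝ)/lam)^p * Real.exp (-(p:ℝ))) with hK
    have hKpos : 0 < K := by positivity
    have hpoint : ∀ x : G, (‖f x‖) ^ p ≤
        K * (Real.exp (((1:ℂ) * (lam:ℂ) * f x).re) + Real.exp (((-1:ℂ) * (lam:ℂ) * f x).re)
          + Real.exp ((Complex.I * (lam:ℂ) * f x).re)
          + Real.exp (((-Complex.I) * (lam:ℂ) * f x).re)) := by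
      intro x
      have h1 : ((1:ℂ) * (lam:ℂ) * f x).re = lam * (f x).re := by
        simp [Complex.mul_re]
      have h2 : ((-1:ℂ) * (lam:ℂ) * f x).re = -(lam * (f x).re) := by
        simp [Complex.mul_re]
      have h3 : (Complex.I * (lam:ℂ) * f x).re = -(lam * (f x).im) := by
        simp [Complex.mul_re, Complex.mul_im]
      have h4 : ((-Complex.I) * (lam:ℂ) * f x).re = lam * (f x).im := by
        simp [Complex.mul_re, Complex.mul_im]
      rw [h1, h2, h3, h4]
      have hre := abs_pow_le_exp p hp1 lam ((f x).re) hlam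
      have him := abs_pow_le_exp p hp1 lam ((f x).im) hlam
      calc (‖f x‖) ^ p ≤ (|(f x).re| + |(f x).im|) ^ p :=
            pow_le_pow_left₀ (norm_nonneg _)
              (Complex.norm_le_abs_re_add_abs_im _) p
        _ ≤ 2 ^ p * (|(f x).re| ^ p + |(f x).im| ^ p) :=
            two_pow_bound _ _ (abs_nonneg _) (abs_nonneg _) p
        _ ≤ K * (Real.exp (lam * (f x).re) + Real.exp (-(lam * (f x).re))
              + Real.exp (-(lam * (f x).im)) + Real.exp (lam * (f x).im)) := by
            rw [hK]
            nlinarith [hre, him, Real.exp_pos (lam * (f x).re), Real.exp_pos (-(lam * (f x).re)),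
              Real.exp_pos (lam * (f x).im), Real.exp_pos (-(lam * (f x).im)),
              pow_pos (div_pos hppos hlam) p, Real.exp_pos (-(p:ℝ)), pow_pos (by norm_num : (0:ℝ) < 2) p]
        _ = K * (Real.exp (lam * (f x).re) + Real.exp (-(lam * (f x).re))
              + Real.exp (-(lam * (f x).im)) + Real.exp (lam * (f x).im)) := rfl
    -- take expectations
    have hexp : 𝔼 x : G, (‖f x‖) ^ p ≤ K * (4 * Real.exp ((p:ℝ)/2)) := by
      calc 𝔼 x : G, (‖f x‖) ^ p
          ≤ 𝔼 x : G, K * (Real.exp (((1:ℂ) * (lam:ℂ) * f x).re)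
              + Real.exp (((-1:ℂ) * (lam:ℂ) * f x).re)
              + Real.exp ((Complex.I * (lam:ℂ) * f x).re)
              + Real.exp (((-Complex.I) * (lam:ℂ) * f x).re)) :=
            Finset.expect_le_expect fun x _ => hpoint x
        _ = K * ((𝔼 x : G, Real.exp (((1:ℂ) * (lam:ℂ) * f x).re))
              + (𝔼 x : G, Real.exp (((-1:ℂ) * (lam:ℂ) * f x).re))
              + (𝔼 x : G, Real.exp ((Complex.I * (lam:ℂ) * f x).re))
              + (𝔼 x : G, Real.exp (((-Complex.I) * (lam:ℂ) * f x).re))) := by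
            simp_rw [← Finset.expect_add_distrib, ← Finset.mul_expect]
        _ ≤ K * (Real.exp ((p:ℝ)/2) + Real.exp ((p:ℝ)/2) + Real.exp ((p:ℝ)/2)
              + Real.exp ((p:ℝ)/2)) := by
            gcongr
            · exact key 1 (by simp)
            · exact key (-1) (by simp)
            · exact key Complex.I (by simp)
            · exact key (-Complex.I) (by simp)
        _ = K * (4 * Real.exp ((p:ℝ)/2)) := by ring
    refine hexp.trans ?_
    -- final arithmetic
    have hpl : (p:ℝ)/lam = Real.sqrt p * Real.sqrt V := by
      rw [hlam_def, div_div_eq_mul_div, mul_comm (p:ℝ) (Real.sqrt V), mul_div_assoc,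
        Real.div_sqrt, mul_comm]
    have hVp : (Real.sqrt V) ^ p = V ^ ((p:ℝ)/2) := by
      rw [← Real.rpow_natCast (Real.sqrt V) p, Real.sqrt_eq_rpow, ← Real.rpow_mul hV0]
      congr 1
      ring
    have hee : Real.exp (-(p:ℝ)) * Real.exp ((p:ℝ)/2) = Real.exp (-((p:ℝ)/2)) := by
      rw [← Real.exp_add]
      congr 1
      ring
    calc K * (4 * Real.exp ((p:ℝ)/2))
        = (2^p * (4 * (Real.exp (-(p:ℝ)) * Real.exp ((p:ℝ)/2)))) *
            ((Real.sqrt p)^p * (Real.sqrt V)^p) := by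
          rw [hK, hpl, mul_pow]
          ring
      _ ≤ (8:ℝ)^p * ((Real.sqrt p)^p * (Real.sqrt V)^p) := by
          have h1 : Real.exp (-((p:ℝ)/2)) ≤ 1 := Real.exp_le_one_iff.2 (neg_nonpos.2 (by positivity))
          have h2 : (4:ℝ) ≤ 4^p := le_self_pow₀ (by norm_num) (by omega)
          have h8 : (8:ℝ)^p = 2^p * 4^p := by rw [← mul_pow]; norm_num
          have h3 : 2^p * (4 * (Real.exp (-(p:ℝ)) * Real.exp ((p:ℝ)/2))) ≤ (8:ℝ)^p := by
            rw [hee, h8]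
            have : (4:ℝ) * Real.exp (-((p:ℝ)/2)) ≤ 4^p := by nlinarith
            have h2p : (0:ℝ) ≤ 2^p := by positivity
            nlinarith
          exact mul_le_mul_of_nonneg_right h3 (by positivity)
      _ = (8 * Real.sqrt p)^p * V ^ ((p:ℝ)/2) := by
          rw [mul_pow, hVp]
          ring
end

section
/- Let p be prime and f : ℤ/pℤ → ℂ a nonzero function. Then |supp f| + |supp f̂| ≥ p + 1, where f̂(ξ) = ∑_{x} f(x)e^{-2πi ξx/p}. -/
open Polynomial


lemma lemF {p : ℕ} [hp : Fact p.Prime] :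
    ∀ (n : ℕ) (P : Polynomial (ZMod p)), P.support.card = n → P ≠ 0 → P.natDegree < p →
      ¬ ((X - 1 : Polynomial (ZMod p)) ^ n ∣ P) := by
  intro n
  induction n using Nat.strong_induction_on with
  | _ n ih =>
    intro P hcard hP hdeg hdvd
    match n, hcard with
    | 0, hcard =>
      exact hP (Polynomial.support_eq_empty.mp (Finset.card_eq_zero.mp hcard))
    | 1, hcard =>
      obtain ⟨k, x, hx, rfl⟩ := Polynomial.card_support_eq_one.mp hcard
      have h1 : (C x * X ^ k).eval 1 = 0 := by
        obtain ⟨T, hT⟩ := hdvd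
        rw [hT]
        simp
      simp at h1
      exact hx h1
    | (m + 2), hcard =>
      set ξ₀ := P.natDegree with hξ₀
      set Q : Polynomial (ZMod p) := X * derivative P - C ((ξ₀ : ZMod p)) * P with hQdef
      have hcoeff : ∀ k : ℕ, Q.coeff k = ((k : ZMod p) - (ξ₀ : ZMod p)) * P.coeff k := by
        intro k
        match k with
        | 0 => simp [hQdef, mul_comm, sub_mul]
        | (k + 1) =>
          rw [hQdef, coeff_sub, coeff_X_mul, coeff_derivative, coeff_C_mul]
          push_cast
          ring
      have hinj : ∀ k ∈ P.support, (k : ZMod p) = (ξ₀ : ZMod p) → k = ξ₀ := by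
        intro k hk hkc
        have h1 : k < p := lt_of_le_of_lt (le_natDegree_of_mem_supp k hk) hdeg
        have h2 : ξ₀ < p := hdeg
        have := congrArg ZMod.val hkc
        rwa [ZMod.val_cast_of_lt h1, ZMod.val_cast_of_lt h2] at this
      have hsupp : Q.support = P.support.erase ξ₀ := by
        ext k
        simp only [Polynomial.mem_support_iff, Finset.mem_erase, hcoeff k]
        constructor
        · intro h
          refine ⟨fun hk => ?_, fun hk => h (by rw [hk]; ring)⟩
          rw [hk] at h; simp at h
        · rintro ⟨hk1, hk2⟩
          exact mul_ne_zero
            (fun hc => hk1 (hinj k (Polynomial.mem_support_iff.mpr hk2) (sub_eq_zero.mp hc))) hk2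
      have hξ₀mem : ξ₀ ∈ P.support := natDegree_mem_support_of_nonzero hP
      have hQcard : Q.support.card = m + 1 := by
        rw [hsupp, Finset.card_erase_of_mem hξ₀mem, hcard]; omega
      have hQ0 : Q ≠ 0 := by
        intro h
        rw [h] at hQcard
        simp at hQcard
      have hQsub : Q.support ⊆ P.support := by rw [hsupp]; exact Finset.erase_subset _ _
      have hQdeg : Q.natDegree < p :=
        lt_of_le_of_lt (le_natDegree_of_mem_supp _ (hQsub (natDegree_mem_support_of_nonzero hQ0)))
          hdeg
      have hQdvd : (X - 1 : Polynomial (ZMod p)) ^ (m + 1) ∣ Q := by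
        obtain ⟨T, hT⟩ := hdvd
        have hder : derivative P =
            C ((m + 2 : ℕ) : ZMod p) * (X - 1) ^ (m + 1) * T + (X - 1) ^ (m + 2) * derivative T := by
          rw [hT, derivative_mul, derivative_pow]
          simp
        have h1 : (X - 1 : Polynomial (ZMod p)) ^ (m + 1) ∣ derivative P := by
          rw [hder]
          exact dvd_add ⟨C ((m + 2 : ℕ) : ZMod p) * T, by ring⟩ ⟨(X - 1) * derivative T, by ring⟩
        have h2 : (X - 1 : Polynomial (ZMod p)) ^ (m + 1) ∣ P :=
          dvd_trans (pow_dvd_pow _ (by omega)) ⟨T, hT⟩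
        exact dvd_sub (Dvd.dvd.mul_left h1 X) (Dvd.dvd.mul_left h2 _)
      exact ih (m + 1) (by omega) Q hQcard hQ0 hQdeg hQdvd


lemma extract_pow {R : Type*} [CommRing R] [IsDomain R] [IsNoetherianRing R]
    (π : R) (hπu : ¬IsUnit π) {n : ℕ} (c : Fin n → R) (j₀ : Fin n) (hc : c j₀ ≠ 0) :
    ∃ (m : ℕ) (d : Fin n → R), (∀ j, c j = π ^ m * d j) ∧ ∃ j, ¬ π ∣ d j := by
  have hbot : (⨅ i : ℕ, Ideal.span {π} ^ i) = ⊥ :=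
    Ideal.iInf_pow_eq_bot_of_isDomain (I := Ideal.span {π}) (by
      intro h; exact hπu (Ideal.span_singleton_eq_top.mp h))
  have hfin : ∃ K, ¬ π ^ K ∣ c j₀ := by
    by_contra h
    push_neg at h
    apply hc
    rw [← Ideal.mem_bot, ← hbot, Ideal.mem_iInf]
    intro i
    rw [Ideal.span_singleton_pow, Ideal.mem_span_singleton]
    exact h i
  obtain ⟨K, hK⟩ := hfin
  have hex : ∃ m, ¬ (∀ j, π ^ m ∣ c j) := ⟨K, fun h => hK (h j₀)⟩
  classical
  set m₀ := Nat.find hex with hm₀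
  have hm₀pos : 0 < m₀ := by
    rcases Nat.eq_zero_or_pos m₀ with h | h
    · exfalso; have := Nat.find_spec hex; rw [← hm₀, h] at this
      exact this (fun j => by simp)
    · exact h
  set m := m₀ - 1 with hm
  have hdvd : ∀ j, π ^ m ∣ c j := by
    have := Nat.find_min hex (m := m) (by omega)
    push_neg at this
    exact not_not.mp (by simpa using this)
  choose d hd using hdvd
  refine ⟨m, d, hd, ?_⟩
  have hnot : ¬ (∀ j, π ^ (m + 1) ∣ c j) := by
    have : m + 1 = m₀ := by omega
    rw [this]
    exact Nat.find_spec hex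
  push_neg at hnot
  obtain ⟨j, hj⟩ := hnot
  refine ⟨j, fun ⟨e, he⟩ => hj ⟨e, ?_⟩⟩
  rw [hd j, he]
  ring

lemma cheb (p : ℕ) [hp : Fact p.Prime] {ω : ℂ} (hω : IsPrimitiveRoot ω p)
    {n : ℕ} (x ξ : Fin n → ℕ) (hx : ∀ i, x i < p) (hξ : ∀ j, ξ j < p)
    (hxinj : Function.Injective x) (hξinj : Function.Injective ξ) :
    (Matrix.of fun i j : Fin n => ω ^ (x i * ξ j)).det ≠ 0 := by
  classical
  have hppos : 0 < p := hp.out.pos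
  have hp1 : 1 < p := hp.out.one_lt
  set q : ℤ[X] := Polynomial.cyclotomic p ℤ with hqdef
  have hqprime : Prime q :=
    UniqueFactorizationMonoid.irreducible_iff_prime.mp (Polynomial.cyclotomic.irreducible hppos)
  haveI hdom : IsDomain (AdjoinRoot q) := AdjoinRoot.isDomain_of_prime hqprime
  haveI hnoeth : IsNoetherianRing (AdjoinRoot q) := Ideal.Quotient.isNoetherianRing _
  set ζ : AdjoinRoot q := AdjoinRoot.root q with hζdef
  -- the map to ℂ
  have hωalg : q.eval₂ (Int.castRingHom ℂ) ω = 0 := by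
    rw [eval₂_eq_eval_map, hqdef, map_cyclotomic_int]
    exact hω.isRoot_cyclotomic hppos
  set φ : AdjoinRoot q →+* ℂ := AdjoinRoot.lift (Int.castRingHom ℂ) ω hωalg with hφdef
  have hφζ : φ ζ = ω := AdjoinRoot.lift_root hωalg
  have hφinj : Function.Injective φ := by
    rw [injective_iff_map_eq_zero]
    intro r hr
    obtain ⟨g, rfl⟩ := AdjoinRoot.mk_surjective r
    rw [hφdef, AdjoinRoot.lift_mk] at hr
    have hg : Polynomial.aeval ω g = 0 := by
      rw [Polynomial.aeval_def, algebraMap_int_eq]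
      exact hr
    have hdvd : minpoly ℤ ω ∣ g :=
      minpoly.isIntegrallyClosed_dvd (hω.isIntegral hppos) hg
    rw [← Polynomial.cyclotomic_eq_minpoly hω hppos] at hdvd
    exact AdjoinRoot.mk_eq_zero.mpr hdvd
  -- the map to ZMod p
  have h1alg : q.eval₂ (Int.castRingHom (ZMod p)) 1 = 0 := by
    rw [Polynomial.eval₂_at_one, hqdef, Polynomial.eval_one_cyclotomic_prime]
    simp
  set ψ : AdjoinRoot q →+* ZMod p := AdjoinRoot.lift (Int.castRingHom (ZMod p)) 1 h1alg
    with hψdef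
  have hψζ : ψ ζ = 1 := AdjoinRoot.lift_root h1alg
  have hkerψ : ∀ r : AdjoinRoot q, ψ r = 0 → (ζ - 1) ∣ r := by
    intro r hr
    obtain ⟨g, rfl⟩ := AdjoinRoot.mk_surjective r
    rw [hψdef, AdjoinRoot.lift_mk, Polynomial.eval₂_at_one] at hr
    obtain ⟨k, hk⟩ := (ZMod.intCast_zmod_eq_zero_iff_dvd _ p).mp hr
    have hmkX1 : AdjoinRoot.mk q (X - C 1) = ζ - 1 := by
      rw [map_sub, AdjoinRoot.mk_C]
      rfl
    have h1 : (ζ - 1) ∣ AdjoinRoot.mk q g - AdjoinRoot.mk q (C (g.eval 1)) := by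
      rw [← hmkX1, ← map_sub]
      exact map_dvd (AdjoinRoot.mk q) (Polynomial.X_sub_C_dvd_sub_C_eval)
    have h2 : (ζ - 1) ∣ AdjoinRoot.mk q (C (q.eval 1)) := by
      have h3 : (ζ - 1) ∣ AdjoinRoot.mk q q - AdjoinRoot.mk q (C (q.eval 1)) := by
        rw [← hmkX1, ← map_sub]
        exact map_dvd (AdjoinRoot.mk q) (Polynomial.X_sub_C_dvd_sub_C_eval)
      rw [AdjoinRoot.mk_self, zero_sub, dvd_neg] at h3
      exact h3
    have hq1 : q.eval 1 = (p : ℤ) := Polynomial.eval_one_cyclotomic_prime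
    have h4 : (ζ - 1) ∣ AdjoinRoot.mk q (C (g.eval 1)) := by
      rw [hk]
      calc (ζ - 1) ∣ AdjoinRoot.mk q (C (q.eval 1)) := h2
        _ ∣ AdjoinRoot.mk q (C ((p : ℤ) * k)) := by
            rw [hq1]
            exact ⟨AdjoinRoot.mk q (C k), by rw [← map_mul, ← C_mul]⟩
    have := dvd_add h1 h4
    rwa [sub_add_cancel] at this
  -- the nonzero kernel vector over AdjoinRoot q
  intro hdet
  set MR : Matrix (Fin n) (Fin n) (AdjoinRoot q) :=
    Matrix.of fun i j => ζ ^ (x i * ξ j) with hMRdef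
  have hdetR : MR.det = 0 := by
    apply hφinj
    rw [RingHom.map_det, map_zero]
    convert hdet using 2
    ext i j
    simp [hMRdef, hφζ]
  set F := FractionRing (AdjoinRoot q) with hFdef
  have halginj : Function.Injective (algebraMap (AdjoinRoot q) F) :=
    IsFractionRing.injective _ _
  have hdetF : (MR.map (algebraMap (AdjoinRoot q) F)).det = 0 := by
    have h := (RingHom.map_det (algebraMap (AdjoinRoot q) F) MR).symm
    rw [RingHom.mapMatrix_apply] at h
    rw [h, hdetR, map_zero]
  obtain ⟨w, hw0, hwker⟩ := Matrix.exists_mulVec_eq_zero_iff.mpr hdetF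
  obtain ⟨b, hb⟩ :=
    IsLocalization.exist_integer_multiples (nonZeroDivisors (AdjoinRoot q)) Finset.univ w
  choose c hc using fun j => hb j (Finset.mem_univ j)
  obtain ⟨j₁, hj₁⟩ := Function.ne_iff.mp hw0
  have hcj₁ : c j₁ ≠ 0 := by
    intro h0
    apply hj₁
    have := hc j₁
    rw [h0, map_zero, Algebra.smul_def] at this
    rcases mul_eq_zero.mp this.symm with h | h
    · exact absurd h (by
        intro hh
        exact nonZeroDivisors.coe_ne_zero b (halginj (by rw [hh, map_zero])))
    · exact h
  have hcker : ∀ i, ∑ j, MR i j * c j = 0 := by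
    intro i
    apply halginj
    rw [map_zero, map_sum]
    have : ∀ j, algebraMap (AdjoinRoot q) F (MR i j * c j) =
        (b : AdjoinRoot q) • (MR.map (algebraMap (AdjoinRoot q) F) i j * w j) := by
      intro j
      rw [map_mul, hc j, Algebra.smul_def, Algebra.smul_def, Matrix.map_apply]
      ring
    rw [Finset.sum_congr rfl fun j _ => this j, ← Finset.smul_sum]
    have hrow : ∑ j, MR.map (algebraMap (AdjoinRoot q) F) i j * w j = 0 := by
      have := congrFun hwker i
      rw [Matrix.mulVec, dotProduct] at this
      exact this
    rw [hrow, smul_zero]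
  -- extract powers of ζ - 1
  have hζ1 : ζ - (1 : AdjoinRoot q) ≠ 0 := by
    intro h
    apply hω.ne_one hp1
    have := congrArg φ h
    rw [map_sub, hφζ, map_one, map_zero, sub_eq_zero] at this
    exact this
  have hπu : ¬ IsUnit (ζ - (1 : AdjoinRoot q)) := by
    intro h
    have h2 := h.map ψ
    rw [map_sub, hψζ, map_one, sub_self] at h2
    exact not_isUnit_zero h2
  obtain ⟨m, d, hd, j₂, hj₂⟩ := extract_pow (ζ - 1) hπu c j₁ hcj₁
  have hdker : ∀ i, ∑ j, ζ ^ (x i * ξ j) * d j = 0 := by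
    intro i
    have h := hcker i
    have h2 : ∑ j, MR i j * c j = (ζ - 1) ^ m * ∑ j, ζ ^ (x i * ξ j) * d j := by
      rw [Finset.mul_sum]
      refine Finset.sum_congr rfl fun j _ => ?_
      rw [hd j, hMRdef]
      simp only [Matrix.of_apply]
      ring
    rw [h2] at h
    exact (mul_eq_zero.mp h).resolve_left (pow_ne_zero m hζ1)
  -- build the polynomial
  set P : Polynomial (AdjoinRoot q) := ∑ j, C (d j) * X ^ (ξ j) with hPdef
  have hPcoeff : ∀ k : Fin n, P.coeff (ξ k) = d k := by
    intro k
    rw [hPdef, Polynomial.finset_sum_coeff]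
    rw [Finset.sum_eq_single k]
    · simp
    · intro j _ hjk
      rw [coeff_C_mul, coeff_X_pow, if_neg (fun h => hjk (hξinj h.symm)), mul_zero]
    · simp
  have hdj₂0 : d j₂ ≠ 0 := fun h => hj₂ (h ▸ dvd_zero _)
  have hP0 : P ≠ 0 := fun h => hdj₂0 (by rw [← hPcoeff j₂, h, Polynomial.coeff_zero])
  have hPeval : ∀ i, P.eval (ζ ^ (x i)) = 0 := by
    intro i
    rw [hPdef, Polynomial.eval_finset_sum]
    have : ∀ j : Fin n, (C (d j) * X ^ (ξ j)).eval (ζ ^ x i) = ζ ^ (x i * ξ j) * d j := by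
      intro j
      rw [eval_mul, eval_C, eval_pow, eval_X, ← pow_mul]
      ring
    rw [Finset.sum_congr rfl fun j _ => this j]
    exact hdker i
  -- roots
  have hζpowinj : Function.Injective (fun i : Fin n => ζ ^ (x i)) := by
    intro i i' h
    apply hxinj
    apply hω.pow_inj (hx i) (hx i')
    have := congrArg φ h
    rwa [map_pow, map_pow, hφζ] at this
  set s : Multiset (AdjoinRoot q) := Multiset.map (fun i => ζ ^ (x i)) Finset.univ.val with hsdef
  have hscard : Multiset.card s = n := by simp [hsdef]
  have hsnodup : s.Nodup := Multiset.Nodup.map hζpowinj Finset.univ.nodup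
  have hsle : s ≤ P.roots := by
    rw [Multiset.le_iff_subset hsnodup]
    intro r hr
    rw [hsdef, Multiset.mem_map] at hr
    obtain ⟨i, _, rfl⟩ := hr
    rw [Polynomial.mem_roots hP0]
    exact hPeval i
  have hdvdP : (s.map fun a => X - C a).prod ∣ P :=
    (Multiset.prod_X_sub_C_dvd_iff_le_roots hP0 s).mpr hsle
  -- map to ZMod p
  set Pb : Polynomial (ZMod p) := P.map ψ with hPbdef
  have hdvdPb : (X - 1 : Polynomial (ZMod p)) ^ n ∣ Pb := by
    obtain ⟨T, hT⟩ := hdvdP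
    refine ⟨T.map ψ, ?_⟩
    rw [hPbdef, hT, Polynomial.map_mul]
    congr 1
    rw [← Polynomial.coe_mapRingHom, map_multiset_prod, Multiset.map_map]
    have : Multiset.map ((Polynomial.mapRingHom ψ) ∘ fun a => X - C a) s =
        Multiset.map (fun _ : AdjoinRoot q => (X - 1 : Polynomial (ZMod p))) s := by
      apply Multiset.map_congr rfl
      intro a ha
      rw [hsdef, Multiset.mem_map] at ha
      obtain ⟨i, _, rfl⟩ := ha
      simp only [Function.comp_apply, Polynomial.coe_mapRingHom, Polynomial.map_sub,
        Polynomial.map_X, Polynomial.map_C]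
      rw [map_pow, hψζ, one_pow, Polynomial.C_1]
    rw [this, Multiset.map_const', hscard, Multiset.prod_replicate]
  have hPbcoeff : ∀ k : Fin n, Pb.coeff (ξ k) = ψ (d k) := by
    intro k
    rw [hPbdef, Polynomial.coeff_map, hPcoeff]
  have hψdj₂ : ψ (d j₂) ≠ 0 := fun h => hj₂ (hkerψ _ h)
  have hPb0 : Pb ≠ 0 := fun h => hψdj₂ (by rw [← hPbcoeff j₂, h, Polynomial.coeff_zero])
  have hsuppsub : Pb.support ⊆ Finset.image (fun j : Fin n => ξ j) Finset.univ := by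
    intro k hk
    rw [Polynomial.mem_support_iff] at hk
    by_contra hkim
    apply hk
    rw [hPbdef, Polynomial.coeff_map, hPdef, Polynomial.finset_sum_coeff]
    rw [Finset.sum_eq_zero, map_zero]
    intro j _
    rw [coeff_C_mul, coeff_X_pow, if_neg, mul_zero]
    intro h
    exact hkim (Finset.mem_image.mpr ⟨j, Finset.mem_univ j, h.symm⟩)
  have hcardle : Pb.support.card ≤ n := by
    calc Pb.support.card ≤ (Finset.image (fun j : Fin n => ξ j) Finset.univ).card :=
          Finset.card_le_card hsuppsub
      _ ≤ Finset.univ.card := Finset.card_image_le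
      _ = n := by simp
  have hPbdeg : Pb.natDegree < p := by
    have hmem := hsuppsub (Polynomial.natDegree_mem_support_of_nonzero hPb0)
    rw [Finset.mem_image] at hmem
    obtain ⟨j, _, hj⟩ := hmem
    rw [← hj]
    exact hξ j
  exact lemF _ Pb rfl hPb0 hPbdeg (dvd_trans (pow_dvd_pow _ hcardle) hdvdPb)

open Complex in
/-- Uncertainty principle for `ℤ/pℤ` (Theorem 2.5): if `f : ℤ/pℤ → ℂ` is nonzero then
`|supp f| + |supp f̂| ≥ p + 1`, where `f̂(ξ) = ∑_x f(x) e^{-2πi ξx/p}`. -/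
theorem uncertainty_zmod (p : ℕ) [Fact p.Prime] (f : ZMod p → ℂ) (hf : f ≠ 0) :
    p + 1 ≤ {x : ZMod p | f x ≠ 0}.ncard +
      {ξ : ZMod p | (∑ x : ZMod p, f x *
        Complex.exp (-2 * Real.pi * I * (ξ.val : ℂ) * (x.val : ℂ) / p)) ≠ 0}.ncard := by
  classical
  have hppos : 0 < p := (Fact.out : p.Prime).pos
  haveI : NeZero p := ⟨hppos.ne'⟩
  set ω : ℂ := Complex.exp (-2 * Real.pi * I / p) with hωdef
  have hω : IsPrimitiveRoot ω p := by
    have h2 := (Complex.isPrimitiveRoot_exp p hppos.ne').inv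
    have h3 : (-2 * (Real.pi:ℂ) * I / p) = -(2 * Real.pi * I / p) := by ring
    rw [hωdef, h3, Complex.exp_neg]
    exact h2
  have hexp : ∀ a b : ZMod p,
      Complex.exp (-2 * Real.pi * I * (a.val : ℂ) * (b.val : ℂ) / p) = ω ^ (a.val * b.val) := by
    intro a b
    rw [hωdef, ← Complex.exp_nat_mul]
    congr 1
    push_cast
    ring
  set fhat : ZMod p → ℂ := fun ξ => ∑ x : ZMod p, f x *
      Complex.exp (-2 * Real.pi * I * (ξ.val : ℂ) * (x.val : ℂ) / p) with hfh
  set A : Finset (ZMod p) := Finset.univ.filter (fun x => f x ≠ 0) with hA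
  set S : Finset (ZMod p) := Finset.univ.filter (fun ξ => fhat ξ ≠ 0) with hS
  have hncard1 : {x : ZMod p | f x ≠ 0}.ncard = A.card := by
    rw [Set.ncard_eq_toFinset_card']
    congr 1
    ext z
    simp [hA]
  have hncard2 : {ξ : ZMod p | fhat ξ ≠ 0}.ncard = S.card := by
    rw [Set.ncard_eq_toFinset_card']
    congr 1
    ext z
    simp [hS]
  rw [show {ξ : ZMod p | (∑ x : ZMod p, f x *
        Complex.exp (-2 * Real.pi * I * (ξ.val : ℂ) * (x.val : ℂ) / p)) ≠ 0}
      = {ξ : ZMod p | fhat ξ ≠ 0} by rfl]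
  rw [hncard1, hncard2]
  by_contra hlt
  push_neg at hlt
  have hlt' : A.card + S.card ≤ p := by omega
  have hA0 : A.Nonempty := by
    obtain ⟨x0, hx0⟩ := Function.ne_iff.mp hf
    refine ⟨x0, ?_⟩
    rw [hA, Finset.mem_filter]
    exact ⟨Finset.mem_univ _, by simpa using hx0⟩
  set a := A.card with ha
  have hapos : 0 < a := Finset.card_pos.mpr hA0
  set Z : Finset (ZMod p) := Finset.univ.filter (fun ξ => fhat ξ = 0) with hZ
  have hZS : Z.card + S.card = p := by
    rw [hZ, hS]
    rw [Finset.card_filter_add_card_filter_not (fun ξ => fhat ξ = 0)]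
    simp [ZMod.card]
  have haZ : a ≤ Z.card := by omega
  obtain ⟨B, hBsub, hBcard⟩ := Finset.exists_subset_card_eq haZ
  have heAcard : Fintype.card A = a := by rw [Fintype.card_coe]
  have heBcard : Fintype.card B = a := by rw [Fintype.card_coe, hBcard]
  set eA : (A : Finset (ZMod p)) ≃ Fin a := Fintype.equivFinOfCardEq heAcard with heA
  set eB : (B : Finset (ZMod p)) ≃ Fin a := Fintype.equivFinOfCardEq heBcard with heB
  set xfun : Fin a → ℕ := fun i => ((eA.symm i : ZMod p)).val with hxfun
  set ξfun : Fin a → ℕ := fun i => ((eB.symm i : ZMod p)).val with hξfun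
  have hxinj : Function.Injective xfun := fun i i' h =>
    eA.symm.injective (Subtype.ext (ZMod.val_injective p h))
  have hξinj : Function.Injective ξfun := fun i i' h =>
    eB.symm.injective (Subtype.ext (ZMod.val_injective p h))
  have hxlt : ∀ i, xfun i < p := fun i => ZMod.val_lt _
  have hξlt : ∀ i, ξfun i < p := fun i => ZMod.val_lt _
  set M : Matrix (Fin a) (Fin a) ℂ := Matrix.of fun i j => ω ^ (ξfun i * xfun j) with hM
  have hdet : M.det ≠ 0 := cheb p hω ξfun xfun hξlt hxlt hξinj hxinj
  set v : Fin a → ℂ := fun j => f ((eA.symm j : ZMod p)) with hv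
  have hfhat_eq : ∀ ξz : ZMod p, fhat ξz = ∑ j : Fin a, ω ^ (ξz.val * xfun j) * v j := by
    intro ξz
    rw [hfh]
    calc (∑ x : ZMod p, f x * Complex.exp (-2 * Real.pi * I * (ξz.val : ℂ) * (x.val : ℂ) / p))
        = ∑ x : ZMod p, ω ^ (ξz.val * x.val) * f x := by
          refine Finset.sum_congr rfl fun z _ => ?_
          rw [hexp]
          ring
      _ = ∑ x ∈ A, ω ^ (ξz.val * x.val) * f x := by
          refine (Finset.sum_subset (Finset.subset_univ A) ?_).symm
          intro z _ hz
          have hz0 : f z = 0 := by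
            by_contra h0
            exact hz (by simp [hA, h0])
          rw [hz0, mul_zero]
      _ = ∑ z : (A : Finset (ZMod p)), ω ^ (ξz.val * (z : ZMod p).val) * f (z : ZMod p) :=
          (Finset.sum_coe_sort A (fun z => ω ^ (ξz.val * z.val) * f z)).symm
      _ = ∑ j : Fin a, ω ^ (ξz.val * xfun j) * v j := by
          refine Fintype.sum_equiv eA _ _ fun z => ?_
          rw [hxfun, hv]
          simp only [Equiv.symm_apply_apply]
  have hMv : M.mulVec v = 0 := by
    funext i
    have hmem : (eB.symm i : ZMod p) ∈ Z := hBsub (eB.symm i).2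
    have hz : fhat ((eB.symm i : ZMod p)) = 0 := by
      rw [hZ] at hmem
      simpa using (Finset.mem_filter.mp hmem).2
    rw [hfhat_eq] at hz
    rw [Matrix.mulVec, Pi.zero_apply, dotProduct]
    rw [← hz]
    rfl
  have hv0 : v = 0 := Matrix.eq_zero_of_mulVec_eq_zero hdet hMv
  set j0 : Fin a := ⟨0, hapos⟩
  have hne : f ((eA.symm j0 : ZMod p)) ≠ 0 := by
    have hmem := (eA.symm j0).2
    simp only [hA, Finset.mem_filter] at hmem
    exact hmem.2
  have hvj : v j0 = 0 := by rw [hv0]; rfl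
  exact hne hvj
end
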